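/- Fix N ≥ 1 and equip the space Fin N → ℂ with the ℂ-bilinear form B x y = ∑ k, (x k) * (y k). Let U be an open subset of ℂ^N (i.e. of EuclideanSpace ℂ (Fin N) or Fin N → ℂ) and let η : Fin N → U → (Fin N → ℂ) be a family of maps, each differentiable on U, such that for all t ∈ U and all indices a, b one has B(η a t, η b t) = (if a = b then 1 else 0), and such that for all indices i ≠ j and all t ∈ U the partial derivative ∂ᵢ(η j)(t) (the derivative of η j at t in the i-th coordinate direction) is a scalar multiple of η i t. Then for all indices i, j and all t ∈ U one has ∂ᵢ(η j)(t) = B(η i t, η j t) • ∂ᵢ(η i)(t) − B(∂ᵢ(η i)(t), η j t) • η i t; that is, ∂ᵢ(η j) = (∂ᵢη i ∧ η i).(η j), where (x ∧ y).z = B(y, z) • x − B(x, z) • y. -/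

import Mathlib

/-- Let `η a : ℂ^N → ℂ^N`, `a ∈ Fin N`, be maps differentiable on an open
set `U`, orthonormal at each `t ∈ U` with respect to the bilinear dot product
`B x y = ∑ k, x k * y k`, and suppose that for `i ≠ j` the partial derivative
`∂ᵢ (η j) (t)` is proportional to `η i t`.  Then for all `i, j` and `t ∈ U`:
`∂ᵢ(η j)(t) = B(η i t, η j t) • ∂ᵢ(η i)(t) − B(∂ᵢ(η i)(t), η j t) • η i t`,
i.e. `∂ᵢ(η j) = (∂ᵢ η i ∧ η i).(η j)`. -/
theorem stmt_6 (N : ℕ) (hN : 1 ≤ N) (U : Set (Fin N → ℂ)) (hU : IsOpen U)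
    (η : Fin N → (Fin N → ℂ) → (Fin N → ℂ))
    (hdiff : ∀ a : Fin N, DifferentiableOn ℂ (η a) U)
    (horth : ∀ t ∈ U, ∀ a b : Fin N,
      (∑ k, η a t k * η b t k) = if a = b then (1 : ℂ) else 0)
    (hprop : ∀ i j : Fin N, i ≠ j → ∀ t ∈ U,
      ∃ c : ℂ, lineDeriv ℂ (η j) t (Pi.single i 1) = c • η i t) :
    ∀ i j : Fin N, ∀ t ∈ U,
      lineDeriv ℂ (η j) t (Pi.single i 1) =
        (∑ k, η i t k * η j t k) • lineDeriv ℂ (η i) t (Pi.single i 1) -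
          (∑ k, lineDeriv ℂ (η i) t (Pi.single i 1) k * η j t k) • η i t := by
  intro i j t ht
  have hmem : U ∈ nhds t := hU.mem_nhds ht
  have hdat : ∀ a, DifferentiableAt ℂ (η a) t :=
    fun a => ((hdiff a).differentiableAt hmem)
  set v : Fin N → ℂ := Pi.single i 1 with hv
  have hline : ∀ a, lineDeriv ℂ (η a) t v = fderiv ℂ (η a) t v :=
    fun a => (hdat a).lineDeriv_eq_fderiv
  have key : ∀ a b : Fin N,
      (∑ k, fderiv ℂ (η a) t v k * η b t k)
      + (∑ k, η a t k * fderiv ℂ (η b) t v k) = 0 := by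
    intro a b
    have hgk : ∀ k : Fin N, HasFDerivAt (fun s => η a s k * η b s k)
        ((η a t k) • ((ContinuousLinearMap.proj k).comp (fderiv ℂ (η b) t))
          + (η b t k) • ((ContinuousLinearMap.proj k).comp (fderiv ℂ (η a) t))) t := by
      intro k
      have hka : HasFDerivAt (fun s => η a s k)
          ((ContinuousLinearMap.proj k).comp (fderiv ℂ (η a) t)) t :=
        (ContinuousLinearMap.proj (R := ℂ) (φ := fun _ : Fin N => ℂ) k).hasFDerivAt.comp t
          (hdat a).hasFDerivAt
      have hkb : HasFDerivAt (fun s => η b s k)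
          ((ContinuousLinearMap.proj k).comp (fderiv ℂ (η b) t)) t :=
        (ContinuousLinearMap.proj (R := ℂ) (φ := fun _ : Fin N => ℂ) k).hasFDerivAt.comp t
          (hdat b).hasFDerivAt
      exact hka.mul hkb
    have hg : HasFDerivAt (fun s => ∑ k, η a s k * η b s k)
        (∑ k, ((η a t k) • ((ContinuousLinearMap.proj k).comp (fderiv ℂ (η b) t))
          + (η b t k) • ((ContinuousLinearMap.proj k).comp (fderiv ℂ (η a) t)))) t :=
      HasFDerivAt.fun_sum (fun k _ => hgk k)
    have hconst : HasFDerivAt (fun s => ∑ k, η a s k * η b s k)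
        (0 : (Fin N → ℂ) →L[ℂ] ℂ) t := by
      have heq : (fun s => ∑ k, η a s k * η b s k) =ᶠ[nhds t]
          (fun _ => if a = b then (1:ℂ) else 0) :=
        Filter.eventually_of_mem hmem (fun s hs => horth s hs a b)
      exact (hasFDerivAt_const _ _).congr_of_eventuallyEq heq
    have hzero := hg.unique hconst
    have := congrArg (fun L => L v) hzero
    simp only [ContinuousLinearMap.sum_apply, ContinuousLinearMap.add_apply,
      ContinuousLinearMap.smul_apply, ContinuousLinearMap.coe_comp', Function.comp_apply,
      ContinuousLinearMap.proj_apply, ContinuousLinearMap.zero_apply, smul_eq_mul] at this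
    rw [Finset.sum_add_distrib] at this
    have hs : (∑ k, fderiv ℂ (η a) t v k * η b t k)
        = ∑ k, η b t k * fderiv ℂ (η a) t v k :=
      Finset.sum_congr rfl fun k _ => mul_comm _ _
    rw [hs, add_comm]
    exact this
  by_cases hij : i = j
  · subst hij
    have h1 : (∑ k, η i t k * η i t k) = 1 := by simpa using horth t ht i i
    have h2 : (∑ k, fderiv ℂ (η i) t v k * η i t k) = 0 := by
      have := key i i
      have hcomm : (∑ k, η i t k * fderiv ℂ (η i) t v k)
          = ∑ k, fderiv ℂ (η i) t v k * η i t k := by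
        apply Finset.sum_congr rfl; intros; ring
      rw [hcomm] at this
      have h2' : (2:ℂ) * (∑ k, fderiv ℂ (η i) t v k * η i t k) = 0 := by
        rw [two_mul]; exact this
      exact (mul_eq_zero.mp h2').resolve_left two_ne_zero
    rw [hline, h1, h2]
    simp
  · have h0 : (∑ k, η i t k * η j t k) = 0 := by
      have := horth t ht i j
      simpa [hij] using this
    obtain ⟨c, hc⟩ := hprop i j hij t ht
    rw [hline] at hc
    have h1 : (∑ k, η i t k * η i t k) = 1 := by simpa using horth t ht i i
    have hcval : (∑ k, η i t k * fderiv ℂ (η j) t v k) = c := by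
      rw [hc]
      simp only [Pi.smul_apply, smul_eq_mul]
      rw [show (∑ k, η i t k * (c * η i t k)) = c * ∑ k, η i t k * η i t k by
        rw [Finset.mul_sum]; apply Finset.sum_congr rfl; intros; ring]
      rw [h1, mul_one]
    have hkey := key i j
    rw [hcval] at hkey
    have hcneg : c = -(∑ k, fderiv ℂ (η i) t v k * η j t k) := by linear_combination hkey
    rw [hline, hline, hc, h0, hcneg]
    simp
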